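/- Let S_1, ..., S_r be subsets of a finite set E such that every element of E is contained in exactly two of the sets, with |S_1| ≤ ... ≤ |S_r|. Then for every t ≥ 0, min(t, |S_1|) + min(t, |S_2 \ S_1|) + ... + min(t, |S_r \ (S_1 ∪ ... ∪ S_{r-1})|) ≥ (r/2) · min(t, |S_1|). -/

import Mathlib

theorem stmt7 {α : Type*} [DecidableEq α] (E : Finset α) {r : ℕ} (hr : 0 < r)
    (S : Fin r → Finset α)
    (hsub : ∀ k, S k ⊆ E)
    (h2 : ∀ x ∈ E, (Finset.univ.filter (fun k => x ∈ S k)).card = 2)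
    (hmono : Monotone (fun k => (S k).card))
    (t : ℝ) (ht : 0 ≤ t) :
    ∑ k, min t ((((S k) \ ((Finset.Iio k).biUnion S)).card : ℝ)) ≥
      ((r : ℝ) / 2) * min t (((S ⟨0, hr⟩).card : ℝ)) := by
  classical
  set m : ℝ := min t ((S ⟨0, hr⟩).card : ℝ) with hm
  have hLnonneg : (0:ℝ) ≤ ∑ k, min t ((((S k) \ ((Finset.Iio k).biUnion S)).card : ℝ)) :=
    Finset.sum_nonneg fun k _ => le_min ht (Nat.cast_nonneg _)
  rcases le_or_gt m 0 with hm0 | hm0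
  · have : ((r:ℝ)/2) * m ≤ 0 := mul_nonpos_of_nonneg_of_nonpos (by positivity) hm0
    linarith
  · -- main case
    have hmt : m ≤ t := min_le_left _ _
    have hdegk : ∀ k, m ≤ ((S k).card : ℝ) := by
      intro k
      have h0 : (⟨0, hr⟩ : Fin r) ≤ k := by
        simp [Fin.le_def]
      have := hmono h0
      calc m ≤ ((S ⟨0, hr⟩).card : ℝ) := min_le_right _ _
        _ ≤ ((S k).card : ℝ) := by exact_mod_cast this
    have hdegpos : ∀ k, (0:ℝ) < ((S k).card : ℝ) := fun k => lt_of_lt_of_le hm0 (hdegk k)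
    -- first index function
    have hne : ∀ x ∈ E, (Finset.univ.filter (fun k => x ∈ S k)).Nonempty := by
      intro x hx
      have := h2 x hx
      exact Finset.card_pos.mp (by omega)
    set F : α → Fin r := fun x =>
      if h : (Finset.univ.filter (fun k => x ∈ S k)).Nonempty
      then (Finset.univ.filter (fun k => x ∈ S k)).min' h else ⟨0, hr⟩ with hF
    have hFmem : ∀ x ∈ E, x ∈ S (F x) := by
      intro x hx
      have h := hne x hx
      have := Finset.min'_mem _ h
      simp only [Finset.mem_filter] at this
      simp only [hF, dif_pos h]
      exact this.2
    have hFle : ∀ x ∈ E, ∀ k, x ∈ S k → F x ≤ k := by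
      intro x hx k hk
      have h := hne x hx
      simp only [hF, dif_pos h]
      exact Finset.min'_le _ _ (by simp [hk])
    -- T k = fiber of F over k
    have hT : ∀ k : Fin r, (S k) \ ((Finset.Iio k).biUnion S) = E.filter (fun x => F x = k) := by
      intro k
      ext x
      simp only [Finset.mem_sdiff, Finset.mem_biUnion, Finset.mem_filter, Finset.mem_Iio]
      constructor
      · rintro ⟨hxk, hnot⟩
        have hxE : x ∈ E := hsub k hxk
        refine ⟨hxE, ?_⟩
        have h1 : F x ≤ k := hFle x hxE k hxk
        rcases lt_or_eq_of_le h1 with h | h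
        · exact absurd ⟨F x, h, hFmem x hxE⟩ hnot
        · exact h
      · rintro ⟨hxE, hfx⟩
        refine ⟨hfx ▸ hFmem x hxE, ?_⟩
        rintro ⟨j, hj, hxj⟩
        have := hFle x hxE j hxj
        rw [hfx] at this
        exact absurd hj (not_lt.mpr this)
    -- weight sum
    have key1 : ∀ k : Fin r,
        (((S k \ (Finset.Iio k).biUnion S).card : ℝ)) * (m / ((S k).card : ℝ))
          ≤ min t (((S k \ (Finset.Iio k).biUnion S).card : ℝ)) := by
      intro k
      have hsub' : (S k \ (Finset.Iio k).biUnion S) ⊆ S k := Finset.sdiff_subset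
      have hcle : (((S k \ (Finset.Iio k).biUnion S).card : ℝ)) ≤ ((S k).card : ℝ) := by
        exact_mod_cast Finset.card_le_card hsub'
      have hd := hdegpos k
      have hcnn : (0:ℝ) ≤ (((S k \ (Finset.Iio k).biUnion S).card : ℝ)) := Nat.cast_nonneg _
      refine le_min ?_ ?_
      · have : (((S k \ (Finset.Iio k).biUnion S).card : ℝ)) * (m / ((S k).card : ℝ)) ≤ m := by
          rw [mul_div_assoc']
          rw [div_le_iff₀ hd]
          nlinarith
        linarith
      · have h1 : m / ((S k).card : ℝ) ≤ 1 := by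
          rw [div_le_one hd]; exact hdegk k
        nlinarith
    -- rewrite each term as sum over fiber
    have key2 : ∀ k : Fin r,
        (((S k \ (Finset.Iio k).biUnion S).card : ℝ)) * (m / ((S k).card : ℝ))
          = ∑ x ∈ E.filter (fun x => F x = k), m / ((S (F x)).card : ℝ) := by
      intro k
      rw [Finset.sum_congr rfl (fun x hx => by
        simp only [Finset.mem_filter] at hx
        rw [hx.2])]
      rw [Finset.sum_const, nsmul_eq_mul, ← hT]
    have key3 : ∑ k, (((S k \ (Finset.Iio k).biUnion S).card : ℝ)) * (m / ((S k).card : ℝ))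
        = ∑ x ∈ E, m / ((S (F x)).card : ℝ) := by
      rw [Finset.sum_congr rfl (fun k _ => key2 k)]
      exact Finset.sum_fiberwise E F _
    -- lower bound on total weight
    have key4 : (r : ℝ) * m ≤ 2 * ∑ x ∈ E, m / ((S (F x)).card : ℝ) := by
      have step1 : ∀ x ∈ E,
          ∑ k ∈ Finset.univ.filter (fun k => x ∈ S k), m / ((S k).card : ℝ)
            ≤ 2 * (m / ((S (F x)).card : ℝ)) := by
        intro x hx
        have hb : ∀ k ∈ Finset.univ.filter (fun k => x ∈ S k),
            m / ((S k).card : ℝ) ≤ m / ((S (F x)).card : ℝ) := by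
          intro k hk
          simp only [Finset.mem_filter] at hk
          have hle : F x ≤ k := hFle x hx k hk.2
          have hdeg : ((S (F x)).card : ℝ) ≤ ((S k).card : ℝ) := by
            exact_mod_cast hmono hle
          exact div_le_div_of_nonneg_left hm0.le (hdegpos (F x)) hdeg
        calc ∑ k ∈ Finset.univ.filter (fun k => x ∈ S k), m / ((S k).card : ℝ)
            ≤ (Finset.univ.filter (fun k => x ∈ S k)).card • (m / ((S (F x)).card : ℝ)) :=
              Finset.sum_le_card_nsmul _ _ _ hb
          _ = 2 * (m / ((S (F x)).card : ℝ)) := by rw [h2 x hx]; push_cast; ring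
      have swap : ∑ x ∈ E, ∑ k ∈ Finset.univ.filter (fun k => x ∈ S k), m / ((S k).card : ℝ)
          = ∑ k : Fin r, ((S k).card : ℝ) * (m / ((S k).card : ℝ)) := by
        have : ∀ x ∈ E, ∑ k ∈ Finset.univ.filter (fun k => x ∈ S k), m / ((S k).card : ℝ)
            = ∑ k : Fin r, if x ∈ S k then m / ((S k).card : ℝ) else 0 := by
          intro x _
          rw [Finset.sum_filter]
        rw [Finset.sum_congr rfl this, Finset.sum_comm]
        refine Finset.sum_congr rfl fun k _ => ?_
        rw [← Finset.sum_filter, Finset.filter_mem_eq_inter,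
          Finset.inter_eq_right.mpr (hsub k), Finset.sum_const, nsmul_eq_mul]
      have deg_cancel : ∀ k : Fin r, ((S k).card : ℝ) * (m / ((S k).card : ℝ)) = m := by
        intro k
        rw [mul_comm, div_mul_cancel₀ _ (hdegpos k).ne']
      have : (r : ℝ) * m = ∑ k : Fin r, ((S k).card : ℝ) * (m / ((S k).card : ℝ)) := by
        rw [Finset.sum_congr rfl fun k _ => deg_cancel k, Finset.sum_const]
        simp [mul_comm]
      rw [this, ← swap]
      calc ∑ x ∈ E, ∑ k ∈ Finset.univ.filter (fun k => x ∈ S k), m / ((S k).card : ℝ)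
          ≤ ∑ x ∈ E, 2 * (m / ((S (F x)).card : ℝ)) := Finset.sum_le_sum step1
        _ = 2 * ∑ x ∈ E, m / ((S (F x)).card : ℝ) := by rw [Finset.mul_sum]
    have main : ∑ k, min t ((((S k) \ ((Finset.Iio k).biUnion S)).card : ℝ))
        ≥ ∑ x ∈ E, m / ((S (F x)).card : ℝ) := by
      rw [← key3]
      exact Finset.sum_le_sum fun k _ => key1 k
    linarith
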